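/- Let φ : [0,∞) → [0,∞) be continuous, increasing and subadditive with φ(0) = 0 and linear growth with constant ν > 0 (φ(x) ≤ ν(x+1) for all x ≥ 0), let μ > 0, and let g : ℝ × ℝ^d → ℝ satisfy |g(y₁, z₁) − g(y₂, z₂)| ≤ μ|y₁ − y₂| + φ(‖z₁ − z₂‖) for all (y₁, z₁), (y₂, z₂). For m > max(μ, ν) define the upper approximation ḡ_m(y, z) := sup{ g(a, b) − m(|y − a| + ‖z − b‖) : (a, b) ∈ ℚ × ℚ^d }. Then for every m > max(μ, ν): (i) ḡ_m(y, z) is finite (the supremum is < +∞) for every (y, z); (ii) ḡ_m is Lipschitz: |ḡ_m(y₁, z₁) − ḡ_m(y₂, z₂)| ≤ m(|y₁ − y₂| + ‖z₁ − z₂‖); (iii) ḡ_m(y, z) ≥ g(y, z); (iv) ḡ_m(y, z) is nonincreasing in m; and (v) for every (y, z), ḡ_m(y, z) → g(y, z) as m → ∞. -/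

import Mathlib

/-- A vector in `ℝ^d` with the given rational coordinates. -/
noncomputable def ratVec (d : ℕ) (b : Fin d → ℚ) : EuclideanSpace ℝ (Fin d) :=
  WithLp.toLp 2 (fun i => (b i : ℝ))

/-- The set `{ g(a,b) − m (|y − a| + ‖z − b‖) : (a,b) ∈ ℚ × ℚ^d }` appearing in the
Lepeltier–San Martin approximation (2.2) of the paper. -/
def upperApproxSet (d : ℕ) (g : ℝ → EuclideanSpace ℝ (Fin d) → ℝ) (m : ℝ)
    (y : ℝ) (z : EuclideanSpace ℝ (Fin d)) : Set ℝ :=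
  {r : ℝ | ∃ (a : ℚ) (b : Fin d → ℚ),
    r = g (a : ℝ) (ratVec d b) - m * (|y - (a : ℝ)| + ‖z - ratVec d b‖)}

/-- The Lepeltier–San Martin upper approximation `ḡ_m` (equation (2.2) of the paper). -/
noncomputable def upperApprox (d : ℕ) (g : ℝ → EuclideanSpace ℝ (Fin d) → ℝ) (m : ℝ)
    (y : ℝ) (z : EuclideanSpace ℝ (Fin d)) : ℝ :=
  sSup (upperApproxSet d g m y z)

lemma phi_small {φ : ℝ → ℝ} (hφ_cont : ContinuousOn φ (Set.Ici 0)) (hφ0 : φ 0 = 0)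
    {ε : ℝ} (hε : 0 < ε) : ∃ δ > 0, ∀ t, 0 ≤ t → t ≤ δ → φ t < ε := by
  have h := hφ_cont 0 Set.self_mem_Ici
  rw [Metric.continuousWithinAt_iff] at h
  obtain ⟨δ, hδ, h⟩ := h ε hε
  refine ⟨δ / 2, by positivity, fun t ht htδ => ?_⟩
  have h1 : dist t 0 < δ := by
    rw [Real.dist_eq, sub_zero, abs_of_nonneg ht]; linarith
  have := h (Set.mem_Ici.mpr ht) h1
  rw [Real.dist_eq, hφ0, sub_zero] at this
  exact lt_of_le_of_lt (le_abs_self _) this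

lemma ratVec_near (d : ℕ) (z : EuclideanSpace ℝ (Fin d)) {ε : ℝ} (hε : 0 < ε) :
    ∃ b : Fin d → ℚ, ‖z - ratVec d b‖ ≤ ε := by
  have hε' : 0 < ε / (d + 1) := by positivity
  choose b hb using fun i => exists_rat_near (z i) hε'
  refine ⟨b, ?_⟩
  rw [EuclideanSpace.norm_eq]
  have hb' : ∀ i, ‖(z - ratVec d b) i‖ ≤ ε / (d + 1) := fun i => by
    simpa [ratVec, Real.norm_eq_abs] using (hb i).le
  have hsum : (∑ i, ‖(z - ratVec d b) i‖ ^ 2) ≤ ε ^ 2 := by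
    calc (∑ i, ‖(z - ratVec d b) i‖ ^ 2) ≤ ∑ _i : Fin d, (ε / (d + 1)) ^ 2 := by
          apply Finset.sum_le_sum
          intro i _
          exact pow_le_pow_left₀ (norm_nonneg _) (hb' i) 2
      _ = (d : ℝ) * (ε / (d + 1)) ^ 2 := by simp [Finset.sum_const, mul_comm]
      _ ≤ ε ^ 2 := by
          rw [div_pow, mul_div_assoc', div_le_iff₀ (by positivity)]
          nlinarith [Nat.cast_nonneg (α := ℝ) d, sq_nonneg ε, sq_nonneg ((d:ℝ))]
  calc √(∑ i, ‖(z - ratVec d b) i‖ ^ 2) ≤ √(ε ^ 2) := Real.sqrt_le_sqrt hsum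
    _ = ε := Real.sqrt_sq hε.le


/-- Properties of the upper approximation `ḡ_m`:
finiteness, `m`-Lipschitz continuity, `ḡ_m ≥ g`, antitonicity in `m`, and pointwise
convergence `ḡ_m → g` as `m → ∞`. -/
theorem stmt_3 (d : ℕ) (hd : 1 ≤ d) (μ ν : ℝ) (hμ : 0 < μ) (hν : 0 < ν)
    (φ : ℝ → ℝ)
    (hφ_cont : ContinuousOn φ (Set.Ici 0))
    (hφ_nonneg : ∀ x, 0 ≤ x → 0 ≤ φ x)
    (hφ_mono : ∀ a b, 0 ≤ a → a ≤ b → φ a ≤ φ b)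
    (hφ_subadd : ∀ a b, 0 ≤ a → 0 ≤ b → φ (a + b) ≤ φ a + φ b)
    (hφ0 : φ 0 = 0)
    (hφ_growth : ∀ x, 0 ≤ x → φ x ≤ ν * (x + 1))
    (g : ℝ → EuclideanSpace ℝ (Fin d) → ℝ)
    (hg : ∀ (y₁ y₂ : ℝ) (z₁ z₂ : EuclideanSpace ℝ (Fin d)),
      |g y₁ z₁ - g y₂ z₂| ≤ μ * |y₁ - y₂| + φ ‖z₁ - z₂‖) :
    (∀ m, max μ ν < m →
      -- (i) finiteness of the supremum
      (∀ (y : ℝ) (z : EuclideanSpace ℝ (Fin d)), BddAbove (upperApproxSet d g m y z)) ∧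
      -- (ii) Lipschitz continuity with constant m
      (∀ (y₁ y₂ : ℝ) (z₁ z₂ : EuclideanSpace ℝ (Fin d)),
        |upperApprox d g m y₁ z₁ - upperApprox d g m y₂ z₂| ≤
          m * (|y₁ - y₂| + ‖z₁ - z₂‖)) ∧
      -- (iii) g ≤ ḡ_m
      (∀ (y : ℝ) (z : EuclideanSpace ℝ (Fin d)), g y z ≤ upperApprox d g m y z)) ∧
    -- (iv) antitonicity in m
    (∀ m₁ m₂, max μ ν < m₁ → m₁ ≤ m₂ →
      ∀ (y : ℝ) (z : EuclideanSpace ℝ (Fin d)),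
        upperApprox d g m₂ y z ≤ upperApprox d g m₁ y z) ∧
    -- (v) pointwise convergence as m → ∞
    (∀ (y : ℝ) (z : EuclideanSpace ℝ (Fin d)),
      Filter.Tendsto (fun m => upperApprox d g m y z) Filter.atTop (nhds (g y z))) := by
  -- nonemptiness of the sup set
  have hne : ∀ m y z, (upperApproxSet d g m y z).Nonempty :=
    fun m y z => ⟨_, 0, fun _ => 0, rfl⟩
  -- boundedness
  have hbdd : ∀ m, max μ ν ≤ m → ∀ y z, BddAbove (upperApproxSet d g m y z) := by
    intro m hm y z
    have hμm : μ ≤ m := le_trans (le_max_left _ _) hm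
    have hνm : ν ≤ m := le_trans (le_max_right _ _) hm
    refine ⟨g y z + ν, ?_⟩
    rintro r ⟨a, b, rfl⟩
    have hp : (0:ℝ) ≤ |y - (a:ℝ)| := abs_nonneg _
    have hq : (0:ℝ) ≤ ‖z - ratVec d b‖ := norm_nonneg _
    have h1 := hg (a:ℝ) y (ratVec d b) z
    rw [abs_sub_comm (a:ℝ) y, norm_sub_rev (ratVec d b) z] at h1
    have h2 : g (a:ℝ) (ratVec d b) - g y z ≤ μ * |y - (a:ℝ)| + φ ‖z - ratVec d b‖ :=
      le_trans (le_abs_self _) h1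
    have h3 := hφ_growth ‖z - ratVec d b‖ hq
    nlinarith
  -- one-sided Lipschitz estimate
  have hlip1 : ∀ m, max μ ν < m → ∀ y₁ z₁ y₂ z₂,
      upperApprox d g m y₁ z₁ ≤ upperApprox d g m y₂ z₂ + m * (|y₁ - y₂| + ‖z₁ - z₂‖) := by
    intro m hm y₁ z₁ y₂ z₂
    have hm0 : (0:ℝ) ≤ m := le_of_lt (lt_of_le_of_lt (le_max_left μ ν) hm |>.trans_le' hμ.le)
    apply csSup_le (hne m y₁ z₁)
    rintro r ⟨a, b, rfl⟩
    have hmem : g (a:ℝ) (ratVec d b) - m * (|y₂ - (a:ℝ)| + ‖z₂ - ratVec d b‖) ∈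
        upperApproxSet d g m y₂ z₂ := ⟨a, b, rfl⟩
    have hle := le_csSup (hbdd m hm.le y₂ z₂) hmem
    have tri1 : |y₂ - (a:ℝ)| ≤ |y₁ - y₂| + |y₁ - (a:ℝ)| := by
      rw [abs_sub_comm y₁ y₂]
      exact (abs_sub_le y₂ y₁ (a:ℝ))
    have tri2 : ‖z₂ - ratVec d b‖ ≤ ‖z₁ - z₂‖ + ‖z₁ - ratVec d b‖ := by
      rw [norm_sub_rev z₁ z₂]
      exact norm_sub_le_norm_sub_add_norm_sub z₂ z₁ (ratVec d b)
    have key : m * (|y₂ - (a:ℝ)| + ‖z₂ - ratVec d b‖) ≤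
        m * (|y₁ - (a:ℝ)| + ‖z₁ - ratVec d b‖) + m * (|y₁ - y₂| + ‖z₁ - z₂‖) := by
      rw [← mul_add]
      apply mul_le_mul_of_nonneg_left _ hm0
      linarith
    unfold upperApprox at hle ⊢
    linarith
  -- (iii)
  have hge : ∀ m, max μ ν < m → ∀ y z, g y z ≤ upperApprox d g m y z := by
    intro m hm y z
    have hm0 : (0:ℝ) < m := lt_of_le_of_lt (le_trans hμ.le (le_max_left μ ν)) hm
    apply le_of_forall_pos_le_add
    intro ε hε
    obtain ⟨δ, hδ, hφs⟩ := phi_small hφ_cont hφ0 (show (0:ℝ) < ε / 3 by linarith)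
    set η := min δ (ε / (3 * (μ + m + 1))) with hη
    have hη0 : 0 < η := lt_min hδ (by positivity)
    obtain ⟨a, ha⟩ := exists_rat_near y hη0
    obtain ⟨b, hb⟩ := ratVec_near d z hη0
    have hmem : g (a:ℝ) (ratVec d b) - m * (|y - (a:ℝ)| + ‖z - ratVec d b‖) ∈
        upperApproxSet d g m y z := ⟨a, b, rfl⟩
    have hle := le_csSup (hbdd m hm.le y z) hmem
    have h1 := hg y (a:ℝ) z (ratVec d b)
    have h2 : g y z - g (a:ℝ) (ratVec d b) ≤ μ * |y - (a:ℝ)| + φ ‖z - ratVec d b‖ :=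
      le_trans (le_abs_self _) h1
    have hq : (0:ℝ) ≤ ‖z - ratVec d b‖ := norm_nonneg _
    have hφq : φ ‖z - ratVec d b‖ < ε / 3 :=
      hφs _ hq (le_trans hb (min_le_left _ _))
    have hηε : η ≤ ε / (3 * (μ + m + 1)) := min_le_right _ _
    have hp : (0:ℝ) ≤ |y - (a:ℝ)| := abs_nonneg _
    have hbound : μ * |y - (a:ℝ)| + m * (|y - (a:ℝ)| + ‖z - ratVec d b‖) ≤ 2 * ε / 3 := by
      have h3 : μ * |y - (a:ℝ)| + m * (|y - (a:ℝ)| + ‖z - ratVec d b‖) ≤ (μ + 2 * m) * η := by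
        nlinarith [ha.le, hb]
      have h4 : (μ + 2 * m) * η ≤ (μ + 2 * m) * (ε / (3 * (μ + m + 1))) := by
        apply mul_le_mul_of_nonneg_left hηε (by linarith)
      have h5 : (μ + 2 * m) * (ε / (3 * (μ + m + 1))) ≤ 2 * ε / 3 := by
        rw [mul_div_assoc', div_le_div_iff₀ (by positivity) (by norm_num)]
        nlinarith
      linarith
    unfold upperApprox
    linarith
  refine ⟨fun m hm => ⟨hbdd m hm.le, ?_, hge m hm⟩, ?_, ?_⟩
  · -- (ii)
    intro y₁ y₂ z₁ z₂
    rw [abs_sub_le_iff]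
    constructor
    · have := hlip1 m hm y₁ z₁ y₂ z₂
      linarith
    · have := hlip1 m hm y₂ z₂ y₁ z₁
      rw [abs_sub_comm y₂ y₁, norm_sub_rev z₂ z₁] at this
      linarith
  · -- (iv)
    intro m₁ m₂ h1 h12 y z
    apply csSup_le (hne m₂ y z)
    rintro r ⟨a, b, rfl⟩
    have hmem : g (a:ℝ) (ratVec d b) - m₁ * (|y - (a:ℝ)| + ‖z - ratVec d b‖) ∈
        upperApproxSet d g m₁ y z := ⟨a, b, rfl⟩
    have hle := le_csSup (hbdd m₁ h1.le y z) hmem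
    have hP : (0:ℝ) ≤ |y - (a:ℝ)| + ‖z - ratVec d b‖ :=
      add_nonneg (abs_nonneg _) (norm_nonneg _)
    have := mul_le_mul_of_nonneg_right h12 hP
    unfold upperApprox at hle ⊢
    linarith
  · -- (v)
    intro y z
    rw [Metric.tendsto_atTop]
    intro ε hε
    obtain ⟨δ, hδ, hφs⟩ := phi_small hφ_cont hφ0 (show (0:ℝ) < ε / 2 by linarith)
    refine ⟨max (max μ ν + 1) (ν * (1 + 1 / δ)), fun m hm => ?_⟩
    have hmK : max μ ν < m := lt_of_lt_of_le (by linarith [le_max_left (max μ ν + 1) (ν * (1 + 1/δ))]) hm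
    have hμm : μ < m := lt_of_le_of_lt (le_max_left _ _) hmK
    have hνδ : ν * (1 + 1 / δ) ≤ m := le_trans (le_max_right _ _) hm
    have hupper : upperApprox d g m y z ≤ g y z + ε / 2 := by
      apply csSup_le (hne m y z)
      rintro r ⟨a, b, rfl⟩
      have hp : (0:ℝ) ≤ |y - (a:ℝ)| := abs_nonneg _
      have hq : (0:ℝ) ≤ ‖z - ratVec d b‖ := norm_nonneg _
      have h1 := hg (a:ℝ) y (ratVec d b) z
      rw [abs_sub_comm (a:ℝ) y, norm_sub_rev (ratVec d b) z] at h1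
      have h2 : g (a:ℝ) (ratVec d b) - g y z ≤ μ * |y - (a:ℝ)| + φ ‖z - ratVec d b‖ :=
        le_trans (le_abs_self _) h1
      by_cases hcase : ‖z - ratVec d b‖ ≤ δ
      · have hφq : φ ‖z - ratVec d b‖ < ε / 2 := hφs _ hq hcase
        nlinarith
      · push_neg at hcase
        have h3 := hφ_growth ‖z - ratVec d b‖ hq
        have h4 : ν * (‖z - ratVec d b‖ + 1) ≤ ν * (1 + 1 / δ) * ‖z - ratVec d b‖ := by
          have : δ * 1 ≤ δ * (‖z - ratVec d b‖ / δ) := by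
            rw [mul_div_cancel₀ _ (ne_of_gt hδ)]
            linarith
          have h5 : (1:ℝ) ≤ ‖z - ratVec d b‖ / δ := by
            rw [le_div_iff₀ hδ]; linarith
          have h6 : ν * (1 + 1/δ) * ‖z - ratVec d b‖ = ν * ‖z - ratVec d b‖ + ν * (‖z - ratVec d b‖ / δ) := by
            field_simp
          nlinarith
        have h7 : ν * (1 + 1 / δ) * ‖z - ratVec d b‖ ≤ m * ‖z - ratVec d b‖ :=
          mul_le_mul_of_nonneg_right hνδ hq
        nlinarith
    have hlower := hge m hmK y z
    rw [Real.dist_eq, abs_sub_lt_iff]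
    constructor <;> linarith
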